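/- Let Γ be a finitely generated nilpotent group and let K be a closed subgroup of the unitary group U(n). Let K act on the representation space Hom(Γ,K) by conjugation and give the orbit space Hom(Γ,K)/K the quotient topology. Then Hom(Γ,K) is a connected topological space if and only if Hom(Γ,K)/K is a connected topological space. -/

import Mathlib

/-- The representation space `Hom(Γ,G)`: group homomorphisms with the topology of pointwise
convergence, i.e. the topology induced from the product space `Γ → G`. -/
instance repSpaceTopology {Γ G : Type*} [Group Γ] [Group G] [TopologicalSpace G] :
    TopologicalSpace (Γ →* G) :=
  TopologicalSpace.induced (fun ρ => (ρ : Γ → G)) Pi.topologicalSpace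

/-- The conjugation action of `G` on `Hom(Γ,G)`: `(k • ρ) γ = k * ρ γ * k⁻¹`. -/
instance conjAction {Γ G : Type*} [Group Γ] [Group G] : MulAction G (Γ →* G) where
  smul k ρ := ((MulAut.conj k).toMonoidHom).comp ρ
  one_smul ρ := MonoidHom.ext fun γ => by
    show (MulAut.conj (1 : G)).toMonoidHom.comp ρ γ = ρ γ
    simp
  mul_smul k₁ k₂ ρ := MonoidHom.ext fun γ => by
    show (MulAut.conj (k₁ * k₂)).toMonoidHom.comp ρ γ =
      (MulAut.conj k₁).toMonoidHom.comp ((MulAut.conj k₂).toMonoidHom.comp ρ) γ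
    simp [mul_assoc]

set_option linter.unusedSectionVars false

section Aux

variable {Γ G : Type*} [Group Γ] [Group G] [TopologicalSpace G]

lemma conjAction_smul_apply (k : G) (ρ : Γ →* G) (γ : Γ) :
    (k • ρ) γ = k * ρ γ * k⁻¹ := rfl

lemma conjAction_smul_one (k : G) : k • (1 : Γ →* G) = 1 :=
  MonoidHom.ext fun γ => by simp [conjAction_smul_apply]

lemma repSpace_inducing : Topology.IsInducing ((⇑·) : (Γ →* G) → (Γ → G)) := ⟨rfl⟩

lemma repSpace_embedding : Topology.IsEmbedding ((⇑·) : (Γ →* G) → (Γ → G)) :=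
  ⟨repSpace_inducing, DFunLike.coe_injective⟩

lemma repSpace_continuous_eval (γ : Γ) : Continuous (fun ρ : Γ →* G => ρ γ) :=
  (continuous_apply γ).comp repSpace_inducing.continuous

lemma repSpace_isClosed_range [T2Space G] [IsTopologicalGroup G] :
    IsClosed (Set.range ((⇑·) : (Γ →* G) → (Γ → G))) := by
  have : Set.range ((⇑·) : (Γ →* G) → (Γ → G)) =
      ⋂ p : Γ × Γ, {f : Γ → G | f (p.1 * p.2) = f p.1 * f p.2} := by
    ext f
    constructor
    · rintro ⟨ρ, rfl⟩
      exact Set.mem_iInter.mpr fun p => by simp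
    · intro hf
      exact ⟨MonoidHom.mk' f (fun a b => Set.mem_iInter.mp hf (a, b)), rfl⟩
  rw [this]
  refine isClosed_iInter fun p => isClosed_eq (continuous_apply (p.1 * p.2)) ?_
  exact (continuous_apply p.1).mul (continuous_apply p.2)

lemma repSpace_closedEmbedding [T2Space G] [IsTopologicalGroup G] :
    Topology.IsClosedEmbedding ((⇑·) : (Γ →* G) → (Γ → G)) :=
  ⟨repSpace_embedding, repSpace_isClosed_range⟩

lemma conjAction_continuous_smul [IsTopologicalGroup G] :
    Continuous (fun p : G × (Γ →* G) => p.1 • p.2) := by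
  rw [repSpace_inducing.continuous_iff]
  apply continuous_pi
  intro γ
  show Continuous fun p : G × (Γ →* G) => p.1 * p.2 γ * p.1⁻¹
  exact (continuous_fst.mul ((repSpace_continuous_eval γ).comp continuous_snd)).mul
    continuous_fst.inv

end Aux

lemma unitaryGroup_topologicalGroup (n : ℕ) :
    IsTopologicalGroup (Matrix.unitaryGroup (Fin n) ℂ) where
  continuous_mul := by
    apply Continuous.subtype_mk
    exact (continuous_fst.subtype_val.mul continuous_snd.subtype_val)
  continuous_inv := by
    apply Continuous.subtype_mk
    have : (fun A : Matrix.unitaryGroup (Fin n) ℂ => ((A⁻¹ : _) : Matrix (Fin n) (Fin n) ℂ)) =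
        fun A : Matrix.unitaryGroup (Fin n) ℂ => star (A : Matrix (Fin n) (Fin n) ℂ) := by
      funext A; rfl
    show Continuous fun A : Matrix.unitaryGroup (Fin n) ℂ => ((A⁻¹ : _) : Matrix (Fin n) (Fin n) ℂ)
    rw [this]
    exact continuous_star.comp continuous_subtype_val

lemma unitaryGroup_isCompact (n : ℕ) :
    IsCompact (Matrix.unitaryGroup (Fin n) ℂ : Set (Matrix (Fin n) (Fin n) ℂ)) := by
  have hsub : (Matrix.unitaryGroup (Fin n) ℂ : Set (Matrix (Fin n) (Fin n) ℂ)) ⊆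
      Set.pi Set.univ (fun _ : Fin n => Set.pi Set.univ fun _ : Fin n =>
        Metric.closedBall (0 : ℂ) 1) := by
    intro A hA
    refine Set.mem_univ_pi.mpr ?_
    intro i
    rw [Set.mem_univ_pi]
    intro j
    have h1 : star A * A = 1 := (Unitary.mem_iff.mp hA).1
    have h2 : (star A * A) j j = (1 : Matrix (Fin n) (Fin n) ℂ) j j := by rw [h1]
    rw [Matrix.mul_apply, Matrix.one_apply_eq] at h2
    have h3 : ∀ k, (star A) j k * A k j = (Complex.normSq (A k j) : ℂ) := by
      intro k
      have hk : (star A) j k = star (A k j) := rfl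
      rw [hk]
      simp [Complex.star_def, Complex.normSq_eq_conj_mul_self]
    rw [Finset.sum_congr rfl (fun k _ => h3 k)] at h2
    have h4 : (∑ k, Complex.normSq (A k j)) = 1 := by exact_mod_cast h2
    have h5 : Complex.normSq (A i j) ≤ 1 := by
      rw [← h4]
      exact Finset.single_le_sum (f := fun k => Complex.normSq (A k j))
        (fun k _ => Complex.normSq_nonneg _) (Finset.mem_univ i)
    rw [Metric.mem_closedBall, dist_zero_right]
    have h6 : ‖A i j‖ ^ 2 ≤ 1 := by
      rw [← Complex.sq_norm] at h5
      simpa using h5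
    nlinarith [norm_nonneg (A i j)]
  have hcomp : IsCompact (Set.pi Set.univ (fun _ : Fin n => Set.pi Set.univ fun _ : Fin n =>
      Metric.closedBall (0 : ℂ) 1)) :=
    isCompact_univ_pi fun _ => isCompact_univ_pi fun _ => isCompact_closedBall 0 1
  have hclosed : IsClosed (Matrix.unitaryGroup (Fin n) ℂ : Set (Matrix (Fin n) (Fin n) ℂ)) := by
    have : (Matrix.unitaryGroup (Fin n) ℂ : Set (Matrix (Fin n) (Fin n) ℂ)) =
        {A | star A * A = 1} ∩ {A | A * star A = 1} := by
      ext A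
      exact Unitary.mem_iff
    rw [this]
    exact (isClosed_eq (continuous_star.mul continuous_id) continuous_const).inter
      (isClosed_eq (continuous_id.mul continuous_star) continuous_const)
  exact hcomp.of_isClosed_subset hclosed hsub

set_option maxHeartbeats 1000000 in
set_option synthInstance.maxHeartbeats 400000 in
/-- Let `Γ` be a finitely generated nilpotent group and `K` a closed subgroup of `U(n)`, with
`K` acting on `Hom(Γ,K)` by conjugation. Then `Hom(Γ,K)` is connected if and only if the
orbit space `Hom(Γ,K)/K` (with the quotient topology) is connected. -/
theorem rep_space_connected_iff_quotient_connected
    (n : ℕ) (K : Subgroup (Matrix.unitaryGroup (Fin n) ℂ))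
    (hK : IsClosed (K : Set (Matrix.unitaryGroup (Fin n) ℂ)))
    (Γ : Type*) [Group Γ] (hfg : Group.FG Γ) (hnil : Group.IsNilpotent Γ) :
    ConnectedSpace (Γ →* ↥K) ↔
      ConnectedSpace (Quotient (MulAction.orbitRel ↥K (Γ →* ↥K))) := by
  haveI : IsTopologicalGroup (Matrix.unitaryGroup (Fin n) ℂ) := unitaryGroup_topologicalGroup n
  haveI : CompactSpace (Matrix.unitaryGroup (Fin n) ℂ) :=
    isCompact_iff_compactSpace.mp (unitaryGroup_isCompact n)
  haveI : CompactSpace ↥K := isCompact_iff_compactSpace.mp hK.isCompact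
  haveI : T2Space (Γ →* ↥K) := repSpace_embedding.t2Space
  haveI : CompactSpace (Γ →* ↥K) := repSpace_closedEmbedding.compactSpace
  constructor
  · intro h
    exact Function.Surjective.connectedSpace (fun y => y.exists_rep) continuous_quotient_mk'
  · intro hQ
    rw [connectedSpace_iff_connectedComponent]
    refine ⟨1, Set.eq_univ_iff_forall.mpr fun x => ?_⟩
    rw [connectedComponent_eq_iInter_isClopen, Set.mem_iInter]
    rintro ⟨U, hU, h1U⟩
    show x ∈ U
    set V : Set (Γ →* ↥K) := {z | ∀ g : ↥K, g • z ∈ U} with hV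
    have hVU : V ⊆ U := fun z hz => by simpa [one_smul] using hz 1
    have h1V : (1 : Γ →* ↥K) ∈ V := fun g => by rw [conjAction_smul_one]; exact h1U
    have hVinv : ∀ (g : ↥K) (z : Γ →* ↥K), z ∈ V → g • z ∈ V := by
      intro g z hz h
      rw [smul_smul]
      exact hz _
    have hVopen : IsOpen V := by
      have himg : V = ((fun p : ↥K × (Γ →* ↥K) => p.1 • p.2) '' (Set.univ ×ˢ Uᶜ))ᶜ := by
        ext z
        simp only [Set.mem_compl_iff, Set.mem_image, Set.mem_prod, Set.mem_univ, true_and,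
          Prod.exists, not_exists, hV, Set.mem_setOf_eq]
        constructor
        · intro hz g w hw
          apply hw.1
          have : w = g⁻¹ • z := by rw [← hw.2, inv_smul_smul]
          rw [this]
          exact hz g⁻¹
        · intro hz g
          by_contra hgz
          exact hz g⁻¹ (g • z) ⟨hgz, inv_smul_smul g z⟩
      rw [himg]
      exact (((isCompact_univ.prod hU.isOpen.isClosed_compl.isCompact).image
        conjAction_continuous_smul).isClosed).isOpen_compl
    have hVclosed : IsClosed V := by
      have hiI : V = ⋂ g : ↥K, (fun z : Γ →* ↥K => g • z) ⁻¹' U := by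
        ext z; simp [hV, Set.mem_iInter]
      rw [hiI]
      exact isClosed_iInter fun g => hU.isClosed.preimage
        (conjAction_continuous_smul.comp (continuous_const.prodMk continuous_id))
    set W := Quotient.mk (MulAction.orbitRel ↥K (Γ →* ↥K)) '' V with hW
    have hsat : Quotient.mk (MulAction.orbitRel ↥K (Γ →* ↥K)) ⁻¹' W = V := by
      ext z
      constructor
      · rintro ⟨v, hvV, hvz⟩
        obtain ⟨g, hg⟩ := Quotient.eq''.mp hvz
        have hz : z = g⁻¹ • v := by rw [← hg]; simp
        rw [hz]
        exact hVinv _ _ hvV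
      · intro hz
        exact ⟨z, hz, rfl⟩
    have hWopen : IsOpen W := by
      rw [← isQuotientMap_quotient_mk'.isOpen_preimage]
      exact hsat ▸ hVopen
    have hWclosed : IsClosed W := by
      rw [← isQuotientMap_quotient_mk'.isClosed_preimage]
      exact hsat ▸ hVclosed
    have hWne : W.Nonempty := ⟨_, 1, h1V, rfl⟩
    have hWuniv : W = Set.univ := by
      rcases isClopen_iff.mp ⟨hWclosed, hWopen⟩ with h | h
      · exact absurd h (Set.nonempty_iff_ne_empty.mp hWne)
      · exact h
    have hx : x ∈ Quotient.mk (MulAction.orbitRel ↥K (Γ →* ↥K)) ⁻¹' W := by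
      rw [hWuniv]; trivial
    rw [hsat] at hx
    exact hVU hx
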